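/- Corollary: for any proper scoring rule, a forecast f is weakly dominated by some forecast g ≠ f if and only if f is strongly dominated by some coherent forecast. -/

import Mathlib

open Set MeasureTheory

set_option maxHeartbeats 1000000

namespace Stmt19

variable (s : Fin 2 → ℝ → ENNReal)

/-- real-valued score -/
noncomputable def S (k : Fin 2) (x : ℝ) : ℝ := (s k x).toReal

/-- expected score of forecast `x` under probability `q` -/
noncomputable def lf (x q : ℝ) : ℝ := q * S s 1 x + (1 - q) * S s 0 x

/-- the optimal expected score -/
noncomputable def Gr (p : ℝ) : ℝ := lf s p p

/-- the slope -/
noncomputable def sg (x : ℝ) : ℝ := S s 1 x - S s 0 x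

variable {s}

section basic

variable (hproper : ∀ p ∈ Icc (0:ℝ) 1, ∀ x ∈ Icc (0:ℝ) 1, x ≠ p →
      ENNReal.ofReal p * s 1 p + ENNReal.ofReal (1 - p) * s 0 p <
      ENNReal.ofReal p * s 1 x + ENNReal.ofReal (1 - p) * s 0 x)

include hproper

lemma Gne {p : ℝ} (hp : p ∈ Icc (0:ℝ) 1) :
    ENNReal.ofReal p * s 1 p + ENNReal.ofReal (1 - p) * s 0 p ≠ ⊤ := by
  rcases eq_or_ne p 1 with rfl | hp1
  · exact (hproper 1 hp 0 (by constructor <;> norm_num) (by norm_num)).ne_top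
  · exact (hproper p hp 1 (by constructor <;> norm_num) (Ne.symm hp1)).ne_top

lemma s1_ne_top {p : ℝ} (hp0 : 0 < p) (hp : p ≤ 1) : s 1 p ≠ ⊤ := by
  have h := Gne hproper (⟨hp0.le, hp⟩ : p ∈ Icc (0:ℝ) 1)
  intro htop
  apply h
  rw [ENNReal.add_eq_top]
  left
  rw [htop, ENNReal.mul_top (by simpa using hp0)]

lemma s0_ne_top {p : ℝ} (hp0 : 0 ≤ p) (hp : p < 1) : s 0 p ≠ ⊤ := by
  have h := Gne hproper (⟨hp0, hp.le⟩ : p ∈ Icc (0:ℝ) 1)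
  intro htop
  apply h
  rw [ENNReal.add_eq_top]
  right
  rw [htop, ENNReal.mul_top (by simp; linarith)]

omit hproper in
/-- ofReal of `lf` when scores at `x` are finite. -/
lemma lf_toReal {p : ℝ} (hp : p ∈ Icc (0:ℝ) 1) {x : ℝ} (h1 : s 1 x ≠ ⊤) (h0 : s 0 x ≠ ⊤) :
    ENNReal.ofReal (lf s x p) = ENNReal.ofReal p * s 1 x + ENNReal.ofReal (1 - p) * s 0 x := by
  have hp1 : (0:ℝ) ≤ 1 - p := by linarith [hp.2]
  have e1 : (0:ℝ) ≤ p * S s 1 x := mul_nonneg hp.1 ENNReal.toReal_nonneg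
  have e0 : (0:ℝ) ≤ (1 - p) * S s 0 x := mul_nonneg hp1 ENNReal.toReal_nonneg
  rw [lf, ENNReal.ofReal_add e1 e0,
    ENNReal.ofReal_mul hp.1, ENNReal.ofReal_mul hp1]
  simp only [S, ENNReal.ofReal_toReal h1, ENNReal.ofReal_toReal h0]

lemma Gr_toReal {p : ℝ} (hp : p ∈ Icc (0:ℝ) 1) :
    ENNReal.ofReal (Gr s p) = ENNReal.ofReal p * s 1 p + ENNReal.ofReal (1 - p) * s 0 p := by
  rcases eq_or_lt_of_le hp.1 with h0 | h0
  · -- p = 0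
    have : p = 0 := h0.symm
    subst this
    have hs0 : s 0 0 ≠ ⊤ := s0_ne_top hproper le_rfl one_pos
    simp [Gr, lf, S, ENNReal.ofReal_toReal hs0]
  rcases eq_or_lt_of_le hp.2 with h1 | h1
  · subst h1
    have hs1 : s 1 1 ≠ ⊤ := s1_ne_top hproper one_pos le_rfl
    simp [Gr, lf, S, ENNReal.ofReal_toReal hs1]
  · exact lf_toReal hp (s1_ne_top hproper h0 hp.2) (s0_ne_top hproper hp.1 h1)

omit hproper in
lemma lf_nonneg {p : ℝ} (hp : p ∈ Icc (0:ℝ) 1) (x : ℝ) : 0 ≤ lf s x p := by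
  have := hp.1; have := hp.2
  have h1 : (0:ℝ) ≤ S s 1 x := ENNReal.toReal_nonneg
  have h0 : (0:ℝ) ≤ S s 0 x := ENNReal.toReal_nonneg
  rw [lf]; nlinarith

omit hproper in
lemma Gr_nonneg {p : ℝ} (hp : p ∈ Icc (0:ℝ) 1) : 0 ≤ Gr s p := lf_nonneg hp p

/-- strict support inequality -/
lemma support_lt {p : ℝ} (hp : p ∈ Icc (0:ℝ) 1) {x : ℝ} (hx : x ∈ Icc (0:ℝ) 1)
    (h1 : s 1 x ≠ ⊤) (h0 : s 0 x ≠ ⊤) (hne : x ≠ p) : Gr s p < lf s x p := by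
  have h := hproper p hp x hx hne
  rw [← Gr_toReal hproper hp, ← lf_toReal hp h1 h0] at h
  exact (ENNReal.ofReal_lt_ofReal_iff_of_nonneg (Gr_nonneg hp)).1 h

lemma support_le {p : ℝ} (hp : p ∈ Icc (0:ℝ) 1) {x : ℝ} (hx : x ∈ Icc (0:ℝ) 1)
    (h1 : s 1 x ≠ ⊤) (h0 : s 0 x ≠ ⊤) : Gr s p ≤ lf s x p := by
  rcases eq_or_ne x p with rfl | hne
  · exact le_of_eq rfl
  · exact (support_lt hproper hp hx h1 h0 hne).le

/-- endpoint support at 1: `S 1 1 ≤ S 1 x`. -/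
lemma support1_lt {x : ℝ} (hx : x ∈ Icc (0:ℝ) 1) (h1 : s 1 x ≠ ⊤) (hne : x ≠ 1) :
    S s 1 1 < S s 1 x := by
  have h := hproper 1 (by constructor <;> norm_num) x hx hne
  simp only [sub_self, ENNReal.ofReal_zero, zero_mul, add_zero, ENNReal.ofReal_one, one_mul] at h
  exact ENNReal.toReal_lt_toReal (s1_ne_top hproper one_pos le_rfl) h1 |>.2 h

lemma support0_lt {x : ℝ} (hx : x ∈ Icc (0:ℝ) 1) (h0 : s 0 x ≠ ⊤) (hne : x ≠ 0) :
    S s 0 0 < S s 0 x := by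
  have h := hproper 0 (by constructor <;> norm_num) x hx hne
  simp only [sub_zero, ENNReal.ofReal_zero, zero_mul, zero_add, ENNReal.ofReal_one, one_mul] at h
  exact ENNReal.toReal_lt_toReal (s0_ne_top hproper le_rfl one_pos) h0 |>.2 h

lemma support1_le {x : ℝ} (hx : x ∈ Icc (0:ℝ) 1) (h1 : s 1 x ≠ ⊤) : S s 1 1 ≤ S s 1 x := by
  rcases eq_or_ne x 1 with rfl | hne
  · exact le_rfl
  · exact (support1_lt hproper hx h1 hne).le

lemma support0_le {x : ℝ} (hx : x ∈ Icc (0:ℝ) 1) (h0 : s 0 x ≠ ⊤) : S s 0 0 ≤ S s 0 x := by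
  rcases eq_or_ne x 0 with rfl | hne
  · exact le_rfl
  · exact (support0_lt hproper hx h0 hne).le

end basic

section cont

variable (hproper : ∀ p ∈ Icc (0:ℝ) 1, ∀ x ∈ Icc (0:ℝ) 1, x ≠ p →
      ENNReal.ofReal p * s 1 p + ENNReal.ofReal (1 - p) * s 0 p <
      ENNReal.ofReal p * s 1 x + ENNReal.ofReal (1 - p) * s 0 x)
    (hcont : ∀ i : Fin 2, ContinuousOn (s i) (Icc (0:ℝ) 1))

include hcont

lemma contS {k : Fin 2} {x : ℝ} (hx : x ∈ Icc (0:ℝ) 1) (h : s k x ≠ ⊤) :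
    ContinuousWithinAt (S s k) (Icc (0:ℝ) 1) x :=
  (ENNReal.continuousAt_toReal h).comp_continuousWithinAt (hcont k x hx)

include hproper

lemma contGr : ContinuousOn (Gr s) (Icc (0:ℝ) 1) := by
  intro p hp
  have hgr : Gr s = fun q => q * S s 1 q + (1 - q) * S s 0 q := rfl
  rcases eq_or_lt_of_le hp.1 with h0 | h0
  · -- p = 0
    obtain rfl : p = 0 := h0.symm
    have hS0 : ContinuousWithinAt (S s 0) (Icc (0:ℝ) 1) 0 :=
      contS hcont ⟨le_rfl, zero_le_one⟩ (s0_ne_top hproper le_rfl one_pos)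
    rw [Metric.continuousWithinAt_iff]
    rw [Metric.continuousWithinAt_iff] at hS0
    intro ε hε
    obtain ⟨δ₁, hδ₁, hd1⟩ := hS0 (ε/4) (by positivity)
    set x0 : ℝ := min δ₁ 1 / 2 with hx0def
    have hmin1 : min δ₁ 1 ≤ 1 := min_le_right _ _
    have hminδ : min δ₁ 1 ≤ δ₁ := min_le_left _ _
    have hminpos : 0 < min δ₁ 1 := lt_min hδ₁ one_pos
    have hx0pos : 0 < x0 := by positivity
    have hx0lt1 : x0 < 1 := by rw [hx0def]; linarith
    have hx0half : x0 ≤ 1/2 := by rw [hx0def]; linarith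
    have hx0mem : x0 ∈ Icc (0:ℝ) 1 := ⟨hx0pos.le, hx0lt1.le⟩
    have hS0x0 : |S s 0 x0 - S s 0 0| < ε/4 := by
      have := hd1 hx0mem (by rw [Real.dist_eq, sub_zero, abs_of_pos hx0pos]; rw [hx0def]; linarith)
      rwa [Real.dist_eq] at this
    set B : ℝ := |S s 1 x0| + |S s 0 x0| + |S s 0 0| + 1 with hBdef
    have hB : 0 < B := by positivity
    refine ⟨min x0 (ε/(4*B)), lt_min hx0pos (by positivity), ?_⟩
    intro y hy hyd
    rw [Real.dist_eq, sub_zero, abs_of_nonneg hy.1] at hyd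
    have hy0 : (0:ℝ) ≤ y := hy.1
    have hyx0 : y < x0 := lt_of_lt_of_le hyd (min_le_left _ _)
    have hyB : y * B < ε/4 := by
      have h2 : y < ε/(4*B) := lt_of_lt_of_le hyd (min_le_right _ _)
      calc y * B < (ε/(4*B)) * B := mul_lt_mul_of_pos_right h2 hB
        _ = ε/4 := by field_simp
    have hSy : |S s 0 y - S s 0 0| < ε/4 := by
      have := hd1 hy (by rw [Real.dist_eq, sub_zero, abs_of_nonneg hy0]; rw [hx0def] at hyx0; linarith)
      rwa [Real.dist_eq] at this
    have hup : Gr s y ≤ y * S s 1 x0 + (1 - y) * S s 0 x0 :=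
      support_le hproper hy hx0mem (s1_ne_top hproper hx0pos hx0lt1.le)
        (s0_ne_top hproper hx0pos.le hx0lt1)
    have hlow : (1 - y) * S s 0 y ≤ Gr s y := by
      have h1 : (0:ℝ) ≤ y * S s 1 y := mul_nonneg hy0 ENNReal.toReal_nonneg
      have h2 : Gr s y = y * S s 1 y + (1 - y) * S s 0 y := rfl
      linarith
    have hGr0 : Gr s 0 = S s 0 0 := by simp [Gr, lf]
    rw [Real.dist_eq, hGr0, abs_sub_lt_iff]
    have e1 := abs_lt.1 hS0x0
    have e2 := abs_lt.1 hSy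
    have hb1 : S s 1 x0 ≤ |S s 1 x0| := le_abs_self _
    have hb2 : -|S s 0 x0| ≤ S s 0 x0 := neg_abs_le _
    have hb2' : S s 0 x0 ≤ |S s 0 x0| := le_abs_self _
    have hb3 : S s 0 0 ≤ |S s 0 0| := le_abs_self _
    have hS0ynn : (0:ℝ) ≤ S s 0 y := ENNReal.toReal_nonneg
    have hS00nn : (0:ℝ) ≤ S s 0 0 := ENNReal.toReal_nonneg
    have hyhalf : y ≤ 1/2 := by linarith
    constructor
    · nlinarith [mul_le_mul_of_nonneg_left hb1 hy0, mul_le_mul_of_nonneg_left hb2 hy0]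
    · nlinarith [mul_le_mul_of_nonneg_left e2.2.le hy0, mul_le_mul_of_nonneg_left hb3 hy0,
        mul_nonneg hy0 hS0ynn]
  rcases eq_or_lt_of_le hp.2 with h1 | h1
  · obtain rfl : p = 1 := h1
    have hS1 : ContinuousWithinAt (S s 1) (Icc (0:ℝ) 1) 1 :=
      contS hcont ⟨zero_le_one, le_rfl⟩ (s1_ne_top hproper one_pos le_rfl)
    rw [Metric.continuousWithinAt_iff]
    rw [Metric.continuousWithinAt_iff] at hS1
    intro ε hε
    obtain ⟨δ₁, hδ₁, hd1⟩ := hS1 (ε/4) (by positivity)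
    set x1 : ℝ := 1 - min δ₁ 1 / 2 with hx1def
    have hmin1 : min δ₁ 1 ≤ 1 := min_le_right _ _
    have hminδ : min δ₁ 1 ≤ δ₁ := min_le_left _ _
    have hminpos : 0 < min δ₁ 1 := lt_min hδ₁ one_pos
    have hx1pos : 0 < x1 := by rw [hx1def]; linarith
    have hx1lt1 : x1 < 1 := by rw [hx1def]; linarith
    have hx1mem : x1 ∈ Icc (0:ℝ) 1 := ⟨hx1pos.le, hx1lt1.le⟩
    have hS1x1 : |S s 1 x1 - S s 1 1| < ε/4 := by
      have := hd1 hx1mem (by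
        rw [Real.dist_eq, abs_of_nonpos (by rw [hx1def]; linarith)]
        rw [hx1def]; linarith)
      rwa [Real.dist_eq] at this
    set B : ℝ := |S s 1 x1| + |S s 0 x1| + |S s 1 1| + 1 with hBdef
    have hB : 0 < B := by positivity
    refine ⟨min (min δ₁ 1 / 2) (ε/(4*B)), lt_min (by positivity) (by positivity), ?_⟩
    intro y hy hyd
    rw [Real.dist_eq, abs_of_nonpos (by linarith [hy.2])] at hyd
    have hy1 : y ≤ 1 := hy.2
    have hy0 : (0:ℝ) ≤ y := hy.1
    have hyx1 : x1 < y := by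
      have := lt_of_lt_of_le hyd (min_le_left _ _)
      rw [hx1def]; linarith
    have hyB : (1 - y) * B < ε/4 := by
      have h2 : 1 - y < ε/(4*B) := by
        have := lt_of_lt_of_le hyd (min_le_right _ _); linarith
      calc (1-y) * B < (ε/(4*B)) * B := mul_lt_mul_of_pos_right h2 hB
        _ = ε/4 := by field_simp
    have hSy : |S s 1 y - S s 1 1| < ε/4 := by
      have := hd1 hy (by
        rw [Real.dist_eq, abs_of_nonpos (by linarith)]
        have := lt_of_lt_of_le hyd (min_le_left _ _); linarith)
      rwa [Real.dist_eq] at this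
    have hymem : y ∈ Icc (0:ℝ) 1 := hy
    have hup : Gr s y ≤ y * S s 1 x1 + (1 - y) * S s 0 x1 :=
      support_le hproper hymem hx1mem (s1_ne_top hproper hx1pos hx1lt1.le)
        (s0_ne_top hproper hx1pos.le hx1lt1)
    have hlow : y * S s 1 y ≤ Gr s y := by
      have h1 : (0:ℝ) ≤ (1 - y) * S s 0 y := mul_nonneg (by linarith) ENNReal.toReal_nonneg
      have h2 : Gr s y = y * S s 1 y + (1 - y) * S s 0 y := rfl
      linarith
    have hGr1 : Gr s 1 = S s 1 1 := by simp [Gr, lf]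
    rw [Real.dist_eq, hGr1, abs_sub_lt_iff]
    have e1 := abs_lt.1 hS1x1
    have e2 := abs_lt.1 hSy
    have hb1 : S s 0 x1 ≤ |S s 0 x1| := le_abs_self _
    have hb2 : -|S s 1 x1| ≤ S s 1 x1 := neg_abs_le _
    have hb2' : S s 1 x1 ≤ |S s 1 x1| := le_abs_self _
    have hb3 : S s 1 1 ≤ |S s 1 1| := le_abs_self _
    have hS1ynn : (0:ℝ) ≤ S s 1 y := ENNReal.toReal_nonneg
    have hS11nn : (0:ℝ) ≤ S s 1 1 := ENNReal.toReal_nonneg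
    have hy1' : (0:ℝ) ≤ 1 - y := by linarith
    have hyhalf : 1 - y ≤ 1/2 := by
      have := lt_of_lt_of_le hyd (min_le_left _ _); linarith
    constructor
    · nlinarith [mul_le_mul_of_nonneg_left hb1 hy1', mul_le_mul_of_nonneg_left hb2 hy1']
    · nlinarith [mul_le_mul_of_nonneg_left e2.2.le hy1', mul_le_mul_of_nonneg_left hb3 hy1',
        mul_nonneg hy1' hS1ynn]
  · -- interior
    rw [hgr]
    exact (continuousWithinAt_id.mul (contS hcont hp (s1_ne_top hproper h0 hp.2))).add
      (((continuousWithinAt_const.sub continuousWithinAt_id)).mul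
        (contS hcont hp (s0_ne_top hproper hp.1 h1)))

end cont

section pyth

variable (hproper : ∀ p ∈ Icc (0:ℝ) 1, ∀ x ∈ Icc (0:ℝ) 1, x ≠ p →
      ENNReal.ofReal p * s 1 p + ENNReal.ofReal (1 - p) * s 0 p <
      ENNReal.ofReal p * s 1 x + ENNReal.ofReal (1 - p) * s 0 x)
    (hcont : ∀ i : Fin 2, ContinuousOn (s i) (Icc (0:ℝ) 1))

include hproper hcont

lemma pyth {n : ℕ} {N : Finset (Fin n)} {F : Fin n → ℝ}
    {K : Set (Fin n → ℝ)} (hKconv : Convex ℝ K)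
    (hbox : ∀ p ∈ K, ∀ i, p i ∈ Icc (0:ℝ) 1)
    (hboxN : ∀ p ∈ K, ∀ i ∈ N, p i ∈ Ioo (0:ℝ) 1)
    {π : Fin n → ℝ} (hπK : π ∈ K)
    (hmin : ∀ q ∈ K, (∑ i ∈ N, (lf s (F i) (π i) - Gr s (π i))) ≤
      ∑ i ∈ N, (lf s (F i) (q i) - Gr s (q i)))
    {u : Fin n → ℝ} (huK : u ∈ K) :
    (∑ i ∈ N, (lf s (F i) (π i) - Gr s (π i))) ≤
      ∑ i ∈ N, (lf s (F i) (u i) - lf s (π i) (u i)) := by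
  have hkey : ∀ t ∈ Ioc (0:ℝ) 1,
      (∑ i ∈ N, (u i - π i) * sg s (π i + t * (u i - π i))) ≤
        ∑ i ∈ N, (u i - π i) * sg s (F i) := by
    intro t ht
    have ht0 := ht.1
    have ht1 := ht.2
    set q : Fin n → ℝ := fun i => π i + t * (u i - π i) with hqdef
    have hqK : q ∈ K := by
      have h := hKconv hπK huK (by linarith : (0:ℝ) ≤ 1 - t) ht0.le (by ring)
      convert h using 1
      funext i
      simp only [hqdef, Pi.add_apply, Pi.smul_apply, smul_eq_mul]
      ring
    have hmq := hmin q hqK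
    have hterm : ∀ i ∈ N, t * ((u i - π i) * sg s (q i)) ≤ Gr s (q i) - Gr s (π i) := by
      intro i hi
      have hqi : q i ∈ Ioo (0:ℝ) 1 := hboxN q hqK i hi
      have hπi : π i ∈ Icc (0:ℝ) 1 := hbox π hπK i
      have hsupp : Gr s (π i) ≤ lf s (q i) (π i) :=
        support_le hproper hπi ⟨hqi.1.le, hqi.2.le⟩ (s1_ne_top hproper hqi.1 hqi.2.le)
          (s0_ne_top hproper hqi.1.le hqi.2)
      have hexp : lf s (q i) (π i) = Gr s (q i) + (π i - q i) * sg s (q i) := by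
        simp only [lf, Gr, sg]; ring
      have hqi' : π i - q i = -(t * (u i - π i)) := by simp only [hqdef]; ring
      rw [hexp, hqi'] at hsupp
      linarith
    have hsum1 : (∑ i ∈ N, t * ((u i - π i) * sg s (q i))) ≤
        ∑ i ∈ N, (Gr s (q i) - Gr s (π i)) := Finset.sum_le_sum hterm
    have e1 : (∑ i ∈ N, (lf s (F i) (q i) - lf s (F i) (π i))) =
        ∑ i ∈ N, t * ((u i - π i) * sg s (F i)) := by
      refine Finset.sum_congr rfl fun i _ => ?_
      simp only [lf, sg, hqdef]; ring
    rw [Finset.sum_sub_distrib] at hmq hsum1 e1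
    rw [Finset.sum_sub_distrib] at hmq
    rw [← Finset.mul_sum] at hsum1 e1
    have : t * (∑ i ∈ N, (u i - π i) * sg s (q i)) ≤
        t * ∑ i ∈ N, (u i - π i) * sg s (F i) := by linarith
    exact le_of_mul_le_mul_left this ht0
  have hlim : Filter.Tendsto (fun t => ∑ i ∈ N, (u i - π i) * sg s (π i + t * (u i - π i)))
      (nhdsWithin 0 (Ioi 0)) (nhds (∑ i ∈ N, (u i - π i) * sg s (π i))) := by
    apply tendsto_finset_sum
    intro i hi
    have hπi : π i ∈ Ioo (0:ℝ) 1 := hboxN π hπK i hi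
    have hsg : ContinuousWithinAt (sg s) (Icc (0:ℝ) 1) (π i) :=
      (contS hcont ⟨hπi.1.le, hπi.2.le⟩ (s1_ne_top hproper hπi.1 hπi.2.le)).sub
        (contS hcont ⟨hπi.1.le, hπi.2.le⟩ (s0_ne_top hproper hπi.1.le hπi.2))
    have hbase : Filter.Tendsto (fun t : ℝ => π i + t * (u i - π i)) (nhds 0) (nhds (π i)) := by
      have hc : Continuous (fun t : ℝ => π i + t * (u i - π i)) := by continuity
      have := hc.tendsto (0:ℝ)
      simpa using this
    have hpath : Filter.Tendsto (fun t : ℝ => π i + t * (u i - π i)) (nhdsWithin 0 (Ioi 0))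
        (nhdsWithin (π i) (Icc (0:ℝ) 1)) := by
      refine tendsto_nhdsWithin_of_tendsto_nhds_of_eventually_within _
        (hbase.mono_left nhdsWithin_le_nhds) ?_
      filter_upwards [Ioc_mem_nhdsGT_of_mem (⟨le_rfl, one_pos⟩ : (0:ℝ) ∈ Ico 0 1)] with t ht
      have hπi' : π i ∈ Icc (0:ℝ) 1 := ⟨hπi.1.le, hπi.2.le⟩
      have hui : u i ∈ Icc (0:ℝ) 1 := hbox u huK i
      constructor <;> nlinarith [hπi'.1, hπi'.2, hui.1, hui.2, ht.1, ht.2]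
    exact Filter.Tendsto.mul tendsto_const_nhds (hsg.tendsto.comp hpath)
  have hgrad : (∑ i ∈ N, (u i - π i) * sg s (π i)) ≤ ∑ i ∈ N, (u i - π i) * sg s (F i) := by
    refine le_of_tendsto hlim ?_
    filter_upwards [Ioc_mem_nhdsGT_of_mem (⟨le_rfl, one_pos⟩ : (0:ℝ) ∈ Ico 0 1)] with t ht
    exact hkey t ht
  have idit : (∑ i ∈ N, (lf s (F i) (u i) - lf s (π i) (u i))) =
      (∑ i ∈ N, (lf s (F i) (π i) - Gr s (π i))) +
        ((∑ i ∈ N, (u i - π i) * sg s (F i)) - ∑ i ∈ N, (u i - π i) * sg s (π i)) := by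
    rw [← Finset.sum_sub_distrib, ← Finset.sum_add_distrib]
    refine Finset.sum_congr rfl fun i _ => ?_
    simp only [lf, Gr, sg]; ring
  linarith

end pyth

lemma lf_one (x : ℝ) : lf s x 1 = S s 1 x := by simp [lf]

lemma lf_zero (x : ℝ) : lf s x 0 = S s 0 x := by simp [lf]

lemma Gr_one : Gr s 1 = S s 1 1 := by simp [Gr, lf]

lemma Gr_zero : Gr s 0 = S s 0 0 := by simp [Gr, lf]

lemma hull_box {n : ℕ} {W : Set (Fin n → ℝ)} {lo hi : Fin n → ℝ}
    (h : ∀ w ∈ W, ∀ i, w i ∈ Icc (lo i) (hi i)) :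
    ∀ p ∈ convexHull ℝ W, ∀ i, p i ∈ Icc (lo i) (hi i) := by
  have hsub : convexHull ℝ W ⊆ Set.pi Set.univ (fun i => Icc (lo i) (hi i)) := by
    apply convexHull_min
    · intro w hw i _
      exact h w hw i
    · exact convex_pi fun i _ => convex_Icc _ _
  intro p hp i
  exact hsub hp i (Set.mem_univ i)

section path

variable (hproper : ∀ p ∈ Icc (0:ℝ) 1, ∀ x ∈ Icc (0:ℝ) 1, x ≠ p →
      ENNReal.ofReal p * s 1 p + ENNReal.ofReal (1 - p) * s 0 p <
      ENNReal.ofReal p * s 1 x + ENNReal.ofReal (1 - p) * s 0 x)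
    (hcont : ∀ i : Fin 2, ContinuousOn (s i) (Icc (0:ℝ) 1))

include hcont

lemma tendsto_S_path {k : Fin 2} {a b : ℝ} (ha : a ∈ Icc (0:ℝ) 1) (hb : b ∈ Icc (0:ℝ) 1)
    (hne : s k a ≠ ⊤) :
    Filter.Tendsto (fun η : ℝ => S s k ((1-η) * a + η * b)) (nhdsWithin 0 (Ioi 0))
      (nhds (S s k a)) := by
  have hS : ContinuousWithinAt (S s k) (Icc (0:ℝ) 1) a := contS hcont ha hne
  have hbase : Filter.Tendsto (fun η : ℝ => (1-η) * a + η * b) (nhds 0) (nhds a) := by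
    have hc : Continuous (fun η : ℝ => (1-η) * a + η * b) := by continuity
    have := hc.tendsto (0:ℝ)
    simpa using this
  have hpath : Filter.Tendsto (fun η : ℝ => (1-η) * a + η * b) (nhdsWithin 0 (Ioi 0))
      (nhdsWithin a (Icc (0:ℝ) 1)) := by
    refine tendsto_nhdsWithin_of_tendsto_nhds_of_eventually_within _
      (hbase.mono_left nhdsWithin_le_nhds) ?_
    filter_upwards [Ioc_mem_nhdsGT_of_mem (⟨le_rfl, one_pos⟩ : (0:ℝ) ∈ Ico 0 1)] with t ht
    constructor <;> nlinarith [ha.1, ha.2, hb.1, hb.2, ht.1, ht.2]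
  exact hS.tendsto.comp hpath

end path

lemma coherent_of_hull {Ω : Type*} [MeasurableSpace Ω] {n : ℕ} (E : Fin n → Set Ω)
    (hE : ∀ i, MeasurableSet (E i)) {p : Fin n → ℝ}
    (hp : p ∈ convexHull ℝ (Set.range (fun ω i => (E i).indicator (fun _ => (1:ℝ)) ω))) :
    ∃ μ : Measure Ω, IsProbabilityMeasure μ ∧ ∀ i, p i = (μ (E i)).toReal := by
  classical
  obtain ⟨ι, hι, w, z, hw0, hw1, hz, hx⟩ := mem_convexHull_iff_exists_fintype.1 hp
  letI := hι
  choose ω hω using fun j => Set.mem_range.1 (hz j)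
  set μ : Measure Ω := ∑ j, ENNReal.ofReal (w j) • Measure.dirac (ω j) with hμdef
  have happ : ∀ A : Set Ω, MeasurableSet A →
      μ A = ∑ j, ENNReal.ofReal (w j) * A.indicator 1 (ω j) := by
    intro A hA
    rw [hμdef, Measure.finset_sum_apply]
    refine Finset.sum_congr rfl fun j _ => ?_
    rw [Measure.smul_apply, Measure.dirac_apply' _ hA, smul_eq_mul]
  have hzval : ∀ j i, z j i = (E i).indicator (fun _ => (1:ℝ)) (ω j) := by
    intro j i
    rw [← hω j]
  have hz01 : ∀ j i, z j i = 0 ∨ z j i = 1 := by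
    intro j i
    rw [hzval j i]
    by_cases h : ω j ∈ E i
    · right; rw [Set.indicator_of_mem h]
    · left; rw [Set.indicator_of_notMem h]
  have hprob : IsProbabilityMeasure μ := by
    constructor
    rw [happ univ MeasurableSet.univ]
    simp only [Set.indicator_univ, Pi.one_apply, mul_one]
    rw [← ENNReal.ofReal_sum_of_nonneg (fun j _ => hw0 j), hw1, ENNReal.ofReal_one]
  refine ⟨μ, hprob, fun i => ?_⟩
  have hpi : p i = ∑ j, w j * z j i := by
    rw [← hx]
    rw [Finset.sum_apply]
    simp [Pi.smul_apply, smul_eq_mul]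
  have hEi : μ (E i) = ENNReal.ofReal (p i) := by
    rw [happ (E i) (hE i), hpi, ENNReal.ofReal_sum_of_nonneg]
    · refine Finset.sum_congr rfl fun j _ => ?_
      by_cases h : ω j ∈ E i
      · rw [Set.indicator_of_mem h, ENNReal.ofReal_mul (hw0 j), hzval j i,
          Set.indicator_of_mem h, ENNReal.ofReal_one, Pi.one_apply, mul_one]
      · simp [Set.indicator_of_notMem h, hzval j i]
    · intro j _
      rcases hz01 j i with h | h <;> rw [h]
      · simp
      · simpa using hw0 j
  have hpnn : 0 ≤ p i := by
    rw [hpi]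
    refine Finset.sum_nonneg fun j _ => mul_nonneg (hw0 j) ?_
    rcases hz01 j i with h | h <;> rw [h] <;> norm_num
  rw [hEi, ENNReal.toReal_ofReal hpnn]

section nodom

variable (hproper : ∀ p ∈ Icc (0:ℝ) 1, ∀ x ∈ Icc (0:ℝ) 1, x ≠ p →
      ENNReal.ofReal p * s 1 p + ENNReal.ofReal (1 - p) * s 0 p <
      ENNReal.ofReal p * s 1 x + ENNReal.ofReal (1 - p) * s 0 x)

include hproper

lemma coherent_not_dominated {Ω : Type*} [MeasurableSpace Ω] {n : ℕ}
    (E : Fin n → Set Ω) (hE : ∀ i, MeasurableSet (E i))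
    {f g : Fin n → ℝ} (hf : ∀ i, f i ∈ Icc (0:ℝ) 1) (hg : ∀ i, g i ∈ Icc (0:ℝ) 1)
    (hne : g ≠ f) {μ : Measure Ω} (hμ : IsProbabilityMeasure μ)
    (hμf : ∀ i, f i = (μ (E i)).toReal)
    (hdom : ∀ ω : Ω, (∑ i, s ((E i).indicator (fun _ => (1 : Fin 2)) ω) (g i)) ≤
      (∑ i, s ((E i).indicator (fun _ => (1 : Fin 2)) ω) (f i))) : False := by
  classical
  have hrep : ∀ (h : Fin n → ℝ) (i : Fin n),
      (fun ω => s ((E i).indicator (fun _ => (1 : Fin 2)) ω) (h i)) =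
      fun ω => (E i).indicator (fun _ => s 1 (h i)) ω + (E i)ᶜ.indicator (fun _ => s 0 (h i)) ω := by
    intro h i
    funext ω
    by_cases hω : ω ∈ E i
    · rw [Set.indicator_of_mem hω, Set.indicator_of_mem hω,
        Set.indicator_of_notMem (by simpa using hω), add_zero]
    · rw [Set.indicator_of_notMem hω, Set.indicator_of_notMem hω,
        Set.indicator_of_mem (by simpa using hω), zero_add]
  have hEi : ∀ i, μ (E i) = ENNReal.ofReal (f i) := by
    intro i
    rw [hμf i, ENNReal.ofReal_toReal (measure_ne_top μ _)]
  have hEic : ∀ i, μ (E i)ᶜ = ENNReal.ofReal (1 - f i) := by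
    intro i
    rw [measure_compl (hE i) (measure_ne_top μ _), measure_univ, hEi i,
      ← ENNReal.ofReal_one, ← ENNReal.ofReal_sub _ (hf i).1]
  have key : ∀ h : Fin n → ℝ,
      (∫⁻ ω, (∑ i, s ((E i).indicator (fun _ => (1 : Fin 2)) ω) (h i)) ∂μ) =
      ∑ i, (ENNReal.ofReal (f i) * s 1 (h i) + ENNReal.ofReal (1 - f i) * s 0 (h i)) := by
    intro h
    rw [lintegral_finset_sum]
    · refine Finset.sum_congr rfl fun i _ => ?_
      rw [hrep h i, lintegral_add_left (measurable_const.indicator (hE i)),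
        lintegral_indicator_const (hE i), lintegral_indicator_const (hE i).compl,
        hEi i, hEic i]
      ring
    · intro i _
      rw [hrep h i]
      exact (measurable_const.indicator (hE i)).add (measurable_const.indicator (hE i).compl)
  have hmono : (∑ i, (ENNReal.ofReal (f i) * s 1 (g i) + ENNReal.ofReal (1 - f i) * s 0 (g i))) ≤
      ∑ i, (ENNReal.ofReal (f i) * s 1 (f i) + ENNReal.ofReal (1 - f i) * s 0 (f i)) := by
    rw [← key g, ← key f]
    exact lintegral_mono hdom
  obtain ⟨i₀, hi₀⟩ := Function.ne_iff.1 hne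
  have hterm : ∀ i, (ENNReal.ofReal (f i) * s 1 (f i) + ENNReal.ofReal (1 - f i) * s 0 (f i)) ≤
      ENNReal.ofReal (f i) * s 1 (g i) + ENNReal.ofReal (1 - f i) * s 0 (g i) := by
    intro i
    rcases eq_or_ne (g i) (f i) with h | h
    · rw [h]
    · exact (hproper (f i) (hf i) (g i) (hg i) h).le
  have hstrict : (ENNReal.ofReal (f i₀) * s 1 (f i₀) + ENNReal.ofReal (1 - f i₀) * s 0 (f i₀)) <
      ENNReal.ofReal (f i₀) * s 1 (g i₀) + ENNReal.ofReal (1 - f i₀) * s 0 (g i₀) :=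
    hproper (f i₀) (hf i₀) (g i₀) (hg i₀) hi₀
  have hlt : (∑ i, (ENNReal.ofReal (f i) * s 1 (f i) + ENNReal.ofReal (1 - f i) * s 0 (f i))) <
      ∑ i, (ENNReal.ofReal (f i) * s 1 (g i) + ENNReal.ofReal (1 - f i) * s 0 (g i)) := by
    rw [← Finset.add_sum_erase _ _ (Finset.mem_univ i₀),
      ← Finset.add_sum_erase _ _ (Finset.mem_univ i₀)]
    refine ENNReal.add_lt_add_of_lt_of_le ?_ hstrict (Finset.sum_le_sum fun i _ => hterm i)
    rw [ENNReal.sum_ne_top]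
    exact fun i _ => Gne hproper (hf i)
  exact absurd hmono (not_le.2 hlt)

end nodom

section construction

variable (hproper : ∀ p ∈ Icc (0:ℝ) 1, ∀ x ∈ Icc (0:ℝ) 1, x ≠ p →
      ENNReal.ofReal p * s 1 p + ENNReal.ofReal (1 - p) * s 0 p <
      ENNReal.ofReal p * s 1 x + ENNReal.ofReal (1 - p) * s 0 x)
    (hcont : ∀ i : Fin 2, ContinuousOn (s i) (Icc (0:ℝ) 1))

include hproper hcont

lemma construction {n : ℕ} {V : Set (Fin n → ℝ)} (hVfin : V.Finite) (hVne : V.Nonempty)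
    (hV01 : ∀ v ∈ V, ∀ i, v i = 0 ∨ v i = 1)
    {f : Fin n → ℝ} (hf : ∀ i, f i ∈ Icc (0:ℝ) 1)
    (hfnC : f ∉ convexHull ℝ V) :
    ∃ p ∈ convexHull ℝ V, ∀ v ∈ V,
      (∑ i, if v i = 1 then s 1 (p i) else s 0 (p i)) <
        ∑ i, if v i = 1 then s 1 (f i) else s 0 (f i) := by
  classical
  set VF : Finset (Fin n → ℝ) := hVfin.toFinset with hVFdef
  have hVFcoe : (VF : Set (Fin n → ℝ)) = V := hVfin.coe_toFinset
  have hVFmem : ∀ v, v ∈ VF ↔ v ∈ V := fun v => hVfin.mem_toFinset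
  have hVFne : VF.Nonempty := hVfin.toFinset_nonempty.2 hVne
  have hV01' : ∀ v ∈ VF, ∀ i, v i = 0 ∨ v i = 1 := fun v hv => hV01 v ((hVFmem v).1 hv)
  have hVIcc : ∀ v ∈ VF, ∀ i, v i ∈ Icc (0:ℝ) 1 := by
    intro v hv i
    rcases hV01' v hv i with h | h <;> rw [h] <;> exact ⟨by norm_num, by norm_num⟩
  have hbary : ∀ T : Finset (Fin n → ℝ), T.Nonempty → T ⊆ VF →
      ∃ b, b ∈ convexHull ℝ (T : Set (Fin n → ℝ)) ∧
        (∀ i, (∃ v ∈ T, v i = 1) → (∃ v ∈ T, v i = 0) → b i ∈ Ioo (0:ℝ) 1) ∧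
        (∀ i v, v ∈ T → (∀ w ∈ T, w i = v i) → b i = v i) := by
    intro T hTne hTsub
    have hcard : (0:ℝ) < T.card := by exact_mod_cast Finset.card_pos.2 hTne
    have hsum1 : (∑ _v ∈ T, (1:ℝ)) = T.card := by
      rw [Finset.sum_const, nsmul_eq_mul, mul_one]
    have hbi : ∀ i, T.centerMass (fun _ => (1:ℝ)) id i = (∑ v ∈ T, v i) / T.card := by
      intro i
      rw [Finset.centerMass, hsum1]
      simp only [one_smul, id]
      rw [Pi.smul_apply, Finset.sum_apply, smul_eq_mul, inv_mul_eq_div]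
    refine ⟨T.centerMass (fun _ => (1:ℝ)) id,
      T.centerMass_mem_convexHull (fun _ _ => zero_le_one) (by rw [hsum1]; exact hcard)
        (fun v hv => Finset.mem_coe.2 hv), ?_, ?_⟩
    · intro i h1 h0
      obtain ⟨v1, hv1, hv1i⟩ := h1
      obtain ⟨v0, hv0, hv0i⟩ := h0
      have hpos : 0 < ∑ v ∈ T, v i :=
        Finset.sum_pos' (fun v hv => (hVIcc v (hTsub hv) i).1)
          ⟨v1, hv1, by rw [hv1i]; norm_num⟩
      have hlt : (∑ v ∈ T, v i) < T.card := by
        have h2 : (∑ v ∈ T, v i) < ∑ _v ∈ T, (1:ℝ) :=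
          Finset.sum_lt_sum (fun v hv => (hVIcc v (hTsub hv) i).2)
            ⟨v0, hv0, by rw [hv0i]; norm_num⟩
        rwa [hsum1] at h2
      rw [hbi i]
      exact ⟨by positivity, (div_lt_one hcard).2 hlt⟩
    · intro i v hv hall
      rw [hbi i]
      have hs : (∑ w ∈ T, w i) = T.card * v i := by
        rw [Finset.sum_congr rfl fun w hw => hall w hw, Finset.sum_const, nsmul_eq_mul]
      rw [hs]
      exact mul_div_cancel_left₀ _ (ne_of_gt hcard)
  set Vfin : Finset (Fin n → ℝ) :=
    VF.filter (fun v => (∑ i, if v i = 1 then s 1 (f i) else s 0 (f i)) ≠ ⊤) with hVfindef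
  have hVfinsub : Vfin ⊆ VF := Finset.filter_subset _ _
  have hPftop : ∀ v ∈ VF, v ∉ Vfin → (∑ i, if v i = 1 then s 1 (f i) else s 0 (f i)) = ⊤ := by
    intro v hv hnv
    by_contra h
    exact hnv (Finset.mem_filter.2 ⟨hv, h⟩)
  have hPfterm : ∀ v ∈ Vfin, ∀ i, (if v i = 1 then s 1 (f i) else s 0 (f i)) ≠ ⊤ := by
    intro v hv i
    exact ENNReal.sum_ne_top.1 (Finset.mem_filter.1 hv).2 i (Finset.mem_univ i)
  obtain ⟨c, hcmemVF, hcIoo, hcconst⟩ := hbary VF hVFne (subset_refl VF)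
  have hcmem : c ∈ convexHull ℝ V := by rw [← hVFcoe]; exact hcmemVF
  have hcIcc : ∀ i, c i ∈ Icc (0:ℝ) 1 :=
    hull_box (lo := fun _ => (0:ℝ)) (hi := fun _ => (1:ℝ))
      (fun w hw i => hVIcc w (Finset.mem_coe.1 hw) i) c hcmemVF
  rcases Finset.eq_empty_or_nonempty Vfin with hVfe | hVfe
  · refine ⟨c, hcmem, ?_⟩
    intro v hvV
    have hvVF : v ∈ VF := (hVFmem v).2 hvV
    have hvtop : (∑ i, if v i = 1 then s 1 (f i) else s 0 (f i)) = ⊤ :=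
      hPftop v hvVF (by rw [hVfe]; exact Finset.notMem_empty v)
    rw [hvtop, lt_top_iff_ne_top, ENNReal.sum_ne_top]
    intro i _
    rcases hV01' v hvVF i with h0 | h1
    · rw [if_neg (by rw [h0]; norm_num)]
      by_cases hbi : (∃ w ∈ VF, w i = 1)
      · have := hcIoo i hbi ⟨v, hvVF, h0⟩
        exact s0_ne_top hproper this.1.le this.2
      · have hall : ∀ w ∈ VF, w i = v i := by
          intro w hw
          rcases hV01' w hw i with h | h
          · rw [h, h0]
          · exact absurd ⟨w, hw, h⟩ hbi
        rw [hcconst i v hvVF hall, h0]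
        exact s0_ne_top hproper le_rfl one_pos
    · rw [if_pos h1]
      by_cases hbi : (∃ w ∈ VF, w i = 0)
      · have := hcIoo i ⟨v, hvVF, h1⟩ hbi
        exact s1_ne_top hproper this.1 this.2.le
      · have hall : ∀ w ∈ VF, w i = v i := by
          intro w hw
          rcases hV01' w hw i with h | h
          · exact absurd ⟨w, hw, h⟩ hbi
          · rw [h, h1]
        rw [hcconst i v hvVF hall, h1]
        exact s1_ne_top hproper one_pos le_rfl
  · obtain ⟨v₀, hv₀⟩ := hVfe
    set N : Finset (Fin n) :=
      Finset.univ.filter (fun i => (∃ v ∈ Vfin, v i = 1) ∧ (∃ v ∈ Vfin, v i = 0)) with hNdef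
    have hNs1 : ∀ i ∈ N, s 1 (f i) ≠ ⊤ := by
      intro i hi
      obtain ⟨⟨v, hv, hvi⟩, -⟩ := (Finset.mem_filter.1 hi).2
      have := hPfterm v hv i
      rwa [if_pos hvi] at this
    have hNs0 : ∀ i ∈ N, s 0 (f i) ≠ ⊤ := by
      intro i hi
      obtain ⟨-, ⟨v, hv, hvi⟩⟩ := (Finset.mem_filter.1 hi).2
      have := hPfterm v hv i
      rwa [if_neg (by rw [hvi]; norm_num)] at this
    have hconstN : ∀ i, i ∉ N → ∀ v ∈ Vfin, v i = v₀ i := by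
      intro i hi v hv
      have hnand : ¬((∃ v ∈ Vfin, v i = 1) ∧ (∃ v ∈ Vfin, v i = 0)) := fun hc =>
        hi (Finset.mem_filter.2 ⟨Finset.mem_univ i, hc⟩)
      rcases hV01' v (hVfinsub hv) i with h | h <;>
        rcases hV01' v₀ (hVfinsub hv₀) i with h0 | h0
      · rw [h, h0]
      · exact absurd ⟨⟨v₀, hv₀, h0⟩, ⟨v, hv, h⟩⟩ hnand
      · exact absurd ⟨⟨v, hv, h⟩, ⟨v₀, hv₀, h0⟩⟩ hnand
      · rw [h, h0]
    obtain ⟨c', hc'KA, hc'Ioo, hc'const⟩ := hbary Vfin ⟨v₀, hv₀⟩ hVfinsub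
    have hc'N : ∀ i ∈ N, c' i ∈ Ioo (0:ℝ) 1 := by
      intro i hi
      obtain ⟨h1, h0⟩ := (Finset.mem_filter.1 hi).2
      exact hc'Ioo i h1 h0
    have hc'constv : ∀ i, i ∉ N → c' i = v₀ i := fun i hi =>
      hc'const i v₀ hv₀ (fun w hw => hconstN i hi w hw)
    have hVfinIcc : ∀ v ∈ Vfin, ∀ i, v i ∈ Icc (0:ℝ) 1 := fun v hv i => hVIcc v (hVfinsub hv) i
    set KA := convexHull ℝ (Vfin : Set (Fin n → ℝ)) with hKAdef
    have hKAV : KA ⊆ convexHull ℝ V := by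
      rw [← hVFcoe]
      exact convexHull_mono (Finset.coe_subset.2 hVfinsub)
    have hKAbox : ∀ p ∈ KA, ∀ i, p i ∈ Icc (0:ℝ) 1 :=
      hull_box (lo := fun _ => (0:ℝ)) (hi := fun _ => (1:ℝ))
        (fun w hw i => hVfinIcc w (Finset.mem_coe.1 hw) i)
    have hc'Icc : ∀ i, c' i ∈ Icc (0:ℝ) 1 := hKAbox c' hc'KA
    set hfun : (Fin n → ℝ) → ℝ := fun p => ∑ i ∈ N, (lf s (f i) (p i) - Gr s (p i)) with hhfun
    have hcontH : ∀ Kset : Set (Fin n → ℝ), (∀ p ∈ Kset, ∀ i, p i ∈ Icc (0:ℝ) 1) →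
        ContinuousOn hfun Kset := by
      intro Kset hbox
      apply continuousOn_finset_sum
      intro i _
      apply ContinuousOn.sub
      · have hcl : Continuous fun p : Fin n → ℝ => lf s (f i) (p i) := by
          simp only [lf]
          exact ((continuous_apply i).mul continuous_const).add
            ((continuous_const.sub (continuous_apply i)).mul continuous_const)
        exact hcl.continuousOn
      · exact (contGr hproper hcont).comp (continuous_apply i).continuousOn
          (fun p hp => hbox p hp i)
    have hKAcomp : IsCompact KA := (Vfin.finite_toSet).isCompact_convexHull ℝ
    have hKAne : KA.Nonempty := ⟨v₀, subset_convexHull ℝ _ (Finset.mem_coe.2 hv₀)⟩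
    obtain ⟨π₀, hπ₀KA, hπ₀min⟩ := hKAcomp.exists_isMinOn hKAne (hcontH KA hKAbox)
    set δ₀ := hfun π₀ with hδ₀def
    have htermnn : ∀ p : Fin n → ℝ, (∀ i, p i ∈ Icc (0:ℝ) 1) → ∀ i ∈ N, 0 ≤ lf s (f i) (p i) - Gr s (p i) := by
      intro p hp i hi
      have := support_le hproper (hp i) (hf i) (hNs1 i hi) (hNs0 i hi)
      linarith
    have hδ₀nn : 0 ≤ δ₀ := Finset.sum_nonneg (htermnn π₀ (fun i => hKAbox π₀ hπ₀KA i))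
    set δc : ℝ := ∑ i ∈ Nᶜ, (lf s (f i) (v₀ i) - Gr s (v₀ i)) with hδcdef
    have hv₀fin : ∀ i, (if v₀ i = 1 then s 1 (f i) else s 0 (f i)) ≠ ⊤ := fun i =>
      hPfterm v₀ hv₀ i
    have hδcterm : ∀ i ∈ Nᶜ, 0 ≤ lf s (f i) (v₀ i) - Gr s (v₀ i) := by
      intro i _
      rcases hV01' v₀ (hVfinsub hv₀) i with h | h
      · rw [h, lf_zero, Gr_zero]
        have hfi := hv₀fin i
        rw [if_neg (by rw [h]; norm_num)] at hfi
        linarith [support0_le hproper (hf i) hfi]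
      · rw [h, lf_one, Gr_one]
        have hfi := hv₀fin i
        rw [if_pos h] at hfi
        linarith [support1_le hproper (hf i) hfi]
    have hδcnn : 0 ≤ δc := Finset.sum_nonneg hδcterm
    set γ := δ₀ + δc with hγdef
    have hγpos : 0 < γ := by
      by_contra hng
      push_neg at hng
      have hδ₀0 : δ₀ = 0 := le_antisymm (by rw [hγdef] at hng; linarith) hδ₀nn
      have hδc0 : δc = 0 := le_antisymm (by rw [hγdef] at hng; linarith) hδcnn
      have hsum0 : (∑ i ∈ N, (lf s (f i) (π₀ i) - Gr s (π₀ i))) = 0 := by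
        have h := hδ₀0
        rw [hδ₀def] at h
        simpa only [hhfun] using h
      have hz := (Finset.sum_eq_zero_iff_of_nonneg
        (htermnn π₀ (fun i => hKAbox π₀ hπ₀KA i))).1 hsum0
      have hNeq : ∀ i ∈ N, π₀ i = f i := by
        intro i hi
        by_contra hne
        have hlt := support_lt hproper (hKAbox π₀ hπ₀KA i) (hf i) (hNs1 i hi) (hNs0 i hi)
          (Ne.symm hne)
        have := hz i hi
        linarith
      have hsumc0 : (∑ i ∈ Nᶜ, (lf s (f i) (v₀ i) - Gr s (v₀ i))) = 0 := by
        rw [← hδcdef]; exact hδc0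
      have hzc := (Finset.sum_eq_zero_iff_of_nonneg hδcterm).1 hsumc0
      have hCeq : ∀ i, i ∉ N → f i = v₀ i := by
        intro i hi
        have hterm0 := hzc i (Finset.mem_compl.2 hi)
        rcases hV01' v₀ (hVfinsub hv₀) i with h | h
        · rw [h, lf_zero, Gr_zero] at hterm0
          have hfi := hv₀fin i
          rw [if_neg (by rw [h]; norm_num)] at hfi
          by_contra hne
          rw [h] at hne
          have := support0_lt hproper (hf i) hfi hne
          linarith
        · rw [h, lf_one, Gr_one] at hterm0
          have hfi := hv₀fin i
          rw [if_pos h] at hfi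
          by_contra hne
          rw [h] at hne
          have := support1_lt hproper (hf i) hfi hne
          linarith
      have hbox2 : ∀ p ∈ KA, ∀ i,
          p i ∈ Icc (if i ∈ N then (0:ℝ) else v₀ i) (if i ∈ N then (1:ℝ) else v₀ i) := by
        apply hull_box
        intro w hw i
        by_cases hi : i ∈ N
        · rw [if_pos hi, if_pos hi]
          exact hVfinIcc w (Finset.mem_coe.1 hw) i
        · rw [if_neg hi, if_neg hi, hconstN i hi w (Finset.mem_coe.1 hw)]
          exact ⟨le_rfl, le_rfl⟩
      have hπ₀const : ∀ i, i ∉ N → π₀ i = v₀ i := by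
        intro i hi
        have h := hbox2 π₀ hπ₀KA i
        rw [if_neg hi, if_neg hi] at h
        exact le_antisymm h.2 h.1
      have hfeq : f = π₀ := by
        funext i
        by_cases hi : i ∈ N
        · exact (hNeq i hi).symm
        · rw [hπ₀const i hi]
          exact hCeq i hi
      exact hfnC (hfeq ▸ hKAV hπ₀KA)
    set K₁ : ℝ := ∑ i ∈ N, (lf s (f i) (c' i) - Gr s (c' i)) with hK₁def
    have hK₁nn : 0 ≤ K₁ := Finset.sum_nonneg (fun i hi => htermnn c' (fun j => hc'Icc j) i hi)
    set ε : ℝ := min (1/2) (γ / (4 * (K₁ + δc + 1))) with hεdef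
    have hεpos : 0 < ε := lt_min (by norm_num) (by positivity)
    have hεhalf : ε ≤ 1/2 := min_le_left _ _
    have hεlt1 : ε < 1 := lt_of_le_of_lt hεhalf (by norm_num)
    have hεbound : ε * (K₁ + δc + 1) ≤ γ / 4 := by
      have h1 : ε ≤ γ / (4 * (K₁ + δc + 1)) := min_le_right _ _
      have h2 : (0:ℝ) < K₁ + δc + 1 := by linarith
      calc ε * (K₁ + δc + 1) ≤ (γ / (4 * (K₁ + δc + 1))) * (K₁ + δc + 1) :=
            mul_le_mul_of_nonneg_right h1 h2.le
        _ = γ / 4 := by field_simp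
    set T : (Fin n → ℝ) → (Fin n → ℝ) := fun v i => (1 - ε) * v i + ε * c' i with hTdef
    set W : Finset (Fin n → ℝ) := Vfin.image T with hWdef
    set K := convexHull ℝ (W : Set (Fin n → ℝ)) with hKdef
    have hKconv : Convex ℝ K := convex_convexHull ℝ _
    have hKsubKA : K ⊆ KA := by
      rw [hKdef]
      apply convexHull_min _ (convex_convexHull ℝ _)
      intro w hw
      obtain ⟨v, hv, rfl⟩ := Finset.mem_image.1 (Finset.mem_coe.1 hw)
      have hvKA : v ∈ KA := subset_convexHull ℝ _ (Finset.mem_coe.2 hv)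
      have hcomb := (convex_convexHull ℝ (Vfin : Set (Fin n → ℝ))) hvKA hc'KA
        (by linarith : (0:ℝ) ≤ 1 - ε) hεpos.le (by ring)
      convert hcomb using 1
      rfl
    have hKbox : ∀ p ∈ K, ∀ i, p i ∈ Icc (0:ℝ) 1 := fun p hp => hKAbox p (hKsubKA hp)
    have hKboxN' : ∀ p ∈ K, ∀ i, p i ∈
        Icc (if i ∈ N then ε * c' i else v₀ i) (if i ∈ N then 1 - ε + ε * c' i else v₀ i) := by
      apply hull_box
      intro w hw i
      obtain ⟨v, hv, rfl⟩ := Finset.mem_image.1 (Finset.mem_coe.1 hw)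
      by_cases hi : i ∈ N
      · rw [if_pos hi, if_pos hi]
        have hvi := hVfinIcc v hv i
        have hci := hc'Icc i
        simp only [hTdef]
        constructor
        · nlinarith [hvi.1]
        · nlinarith [hvi.2]
      · rw [if_neg hi, if_neg hi]
        simp only [hTdef]
        rw [hconstN i hi v hv, hc'constv i hi]
        have heq : (1 - ε) * v₀ i + ε * v₀ i = v₀ i := by ring
        rw [heq]
        exact ⟨le_rfl, le_rfl⟩
    have hKboxN : ∀ p ∈ K, ∀ i ∈ N, p i ∈ Ioo (0:ℝ) 1 := by
      intro p hp i hi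
      have h := hKboxN' p hp i
      rw [if_pos hi, if_pos hi] at h
      have hc := hc'N i hi
      constructor
      · nlinarith [h.1, hc.1]
      · nlinarith [h.2, hc.2]
    have hKconst : ∀ p ∈ K, ∀ i, i ∉ N → p i = v₀ i := by
      intro p hp i hi
      have h := hKboxN' p hp i
      rw [if_neg hi, if_neg hi] at h
      exact le_antisymm h.2 h.1
    have hKcomp : IsCompact K := (W.finite_toSet).isCompact_convexHull ℝ
    have hKne : K.Nonempty :=
      ⟨T v₀, subset_convexHull ℝ _ (Finset.mem_coe.2 (Finset.mem_image_of_mem T hv₀))⟩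
    obtain ⟨π, hπK, hπmin⟩ := hKcomp.exists_isMinOn hKne (hcontH K hKbox)
    have hπKA : π ∈ KA := hKsubKA hπK
    have hπδ₀ : δ₀ ≤ hfun π := isMinOn_iff.1 hπ₀min π hπKA
    have hpy : ∀ u ∈ K, hfun π ≤ ∑ i ∈ N, (lf s (f i) (u i) - lf s (π i) (u i)) := by
      intro u hu
      have hp := pyth hproper hcont hKconv hKbox hKboxN hπK
        (fun q hq => by simpa only [hhfun] using isMinOn_iff.1 hπmin q hq) hu
      simpa only [hhfun] using hp
    have hgain : ∀ v ∈ Vfin, γ/2 ≤ (∑ i ∈ N, (lf s (f i) (v i) - lf s (π i) (v i))) + δc := by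
      intro v hv
      set Av := ∑ i ∈ N, (lf s (f i) (v i) - lf s (π i) (v i)) with hAvdef
      have hTvK : T v ∈ K :=
        subset_convexHull ℝ _ (Finset.mem_coe.2 (Finset.mem_image_of_mem T hv))
      have hsplit : (∑ i ∈ N, (lf s (f i) (T v i) - lf s (π i) (T v i))) =
          (1 - ε) * Av + ε * ∑ i ∈ N, (lf s (f i) (c' i) - lf s (π i) (c' i)) := by
        rw [hAvdef, Finset.mul_sum, Finset.mul_sum, ← Finset.sum_add_distrib]
        refine Finset.sum_congr rfl fun i _ => ?_
        simp only [hTdef, lf]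
        ring
      have hBv : (∑ i ∈ N, (lf s (f i) (c' i) - lf s (π i) (c' i))) ≤ K₁ := by
        rw [hK₁def]
        refine Finset.sum_le_sum fun i hi => ?_
        have hπi : π i ∈ Ioo (0:ℝ) 1 := hKboxN π hπK i hi
        have hsupp := support_le hproper (hc'Icc i) (⟨hπi.1.le, hπi.2.le⟩ : π i ∈ Icc (0:ℝ) 1)
          (s1_ne_top hproper hπi.1 hπi.2.le) (s0_ne_top hproper hπi.1.le hπi.2)
        linarith
      have hineq := hpy (T v) hTvK
      rw [hsplit] at hineq
      have h1 : δ₀ - ε * K₁ ≤ (1 - ε) * Av := by nlinarith [hπδ₀, hBv, hεpos]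
      have h2 : (3/4)*γ ≤ (Av + δc) * (1 - ε) := by nlinarith [h1, hεbound, hδcnn, hεpos.le]
      by_contra hlt
      push_neg at hlt
      have h3 : (Av + δc) * (1 - ε) < (γ/2) * (1 - ε) :=
        mul_lt_mul_of_pos_right hlt (by linarith)
      nlinarith [h2, hγpos, hεpos]
    have hπIcc : ∀ i, π i ∈ Icc (0:ℝ) 1 := fun i => hKbox π hπK i
    have hten : ∀ v ∈ Vfin, Filter.Tendsto
        (fun η => ∑ i, (if v i = 1 then S s 1 ((1-η) * π i + η * c i)
          else S s 0 ((1-η) * π i + η * c i)))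
        (nhdsWithin 0 (Ioi 0))
        (nhds (∑ i, (if v i = 1 then S s 1 (π i) else S s 0 (π i)))) := by
      intro v hv
      apply tendsto_finset_sum
      intro i _
      by_cases hvi : v i = 1
      · simp only [if_pos hvi]
        have hne : s 1 (π i) ≠ ⊤ := by
          by_cases hi : i ∈ N
          · have h := hKboxN π hπK i hi
            exact s1_ne_top hproper h.1 h.2.le
          · have hc := hKconst π hπK i hi
            have hvv := hconstN i hi v hv
            rw [hvi] at hvv
            rw [hc, ← hvv]
            exact s1_ne_top hproper one_pos le_rfl
        exact tendsto_S_path hcont (hπIcc i) (hcIcc i) hne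
      · simp only [if_neg hvi]
        have hv0i : v i = 0 := by
          rcases hV01' v (hVfinsub hv) i with h | h
          · exact h
          · exact absurd h hvi
        have hne : s 0 (π i) ≠ ⊤ := by
          by_cases hi : i ∈ N
          · have h := hKboxN π hπK i hi
            exact s0_ne_top hproper h.1.le h.2
          · have hc := hKconst π hπK i hi
            have hvv := hconstN i hi v hv
            rw [hv0i] at hvv
            rw [hc, ← hvv]
            exact s0_ne_top hproper le_rfl one_pos
        exact tendsto_S_path hcont (hπIcc i) (hcIcc i) hne
    have hgap : ∀ v ∈ Vfin, (∑ i, (if v i = 1 then S s 1 (π i) else S s 0 (π i))) + γ/2 ≤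
        ∑ i, (if v i = 1 then S s 1 (f i) else S s 0 (f i)) := by
      intro v hv
      have hterm2 : ∀ (g : Fin n → ℝ) (i : Fin n),
          (if v i = 1 then S s 1 (g i) else S s 0 (g i)) = lf s (g i) (v i) := by
        intro g i
        rcases hV01' v (hVfinsub hv) i with h | h
        · rw [if_neg (by rw [h]; norm_num), h, lf_zero]
        · rw [if_pos h, h, lf_one]
      have hfsum : (∑ i, (if v i = 1 then S s 1 (f i) else S s 0 (f i))) =
          (∑ i ∈ N, lf s (f i) (v i)) + ∑ i ∈ Nᶜ, lf s (f i) (v₀ i) := by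
        rw [← Finset.sum_add_sum_compl N]
        congr 1
        · exact Finset.sum_congr rfl fun i _ => hterm2 f i
        · refine Finset.sum_congr rfl fun i hi => ?_
          rw [hterm2 f i, hconstN i (Finset.mem_compl.1 hi) v hv]
      have hπsum : (∑ i, (if v i = 1 then S s 1 (π i) else S s 0 (π i))) =
          (∑ i ∈ N, lf s (π i) (v i)) + ∑ i ∈ Nᶜ, Gr s (v₀ i) := by
        rw [← Finset.sum_add_sum_compl N]
        congr 1
        · exact Finset.sum_congr rfl fun i _ => hterm2 π i
        · refine Finset.sum_congr rfl fun i hi => ?_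
          rw [hterm2 π i, hconstN i (Finset.mem_compl.1 hi) v hv,
            hKconst π hπK i (Finset.mem_compl.1 hi)]
          rfl
      have hg := hgain v hv
      rw [hfsum, hπsum]
      have e1 : (∑ i ∈ N, (lf s (f i) (v i) - lf s (π i) (v i))) =
          (∑ i ∈ N, lf s (f i) (v i)) - ∑ i ∈ N, lf s (π i) (v i) := Finset.sum_sub_distrib ..
      have e2 : δc = (∑ i ∈ Nᶜ, lf s (f i) (v₀ i)) - ∑ i ∈ Nᶜ, Gr s (v₀ i) := by
        rw [hδcdef, Finset.sum_sub_distrib]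
      linarith
    have hev : ∀ᶠ η in nhdsWithin (0:ℝ) (Ioi 0), η ∈ Ioo (0:ℝ) 1 ∧
        ∀ v ∈ Vfin, (∑ i, (if v i = 1 then S s 1 ((1-η) * π i + η * c i)
            else S s 0 ((1-η) * π i + η * c i))) <
          ∑ i, (if v i = 1 then S s 1 (f i) else S s 0 (f i)) := by
      refine Filter.Eventually.and (Ioo_mem_nhdsGT_of_mem ⟨le_rfl, one_pos⟩) ?_
      rw [Finset.eventually_all]
      intro v hv
      refine (hten v hv).eventually_lt_const ?_
      have := hgap v hv
      linarith [hγpos]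
    obtain ⟨η₀, hη₀mem, hη₀lt⟩ := hev.exists
    set p : Fin n → ℝ := fun i => (1 - η₀) * π i + η₀ * c i with hpdef
    have hpmem : p ∈ convexHull ℝ V := by
      have hπV : π ∈ convexHull ℝ V := hKAV hπKA
      have hcomb := (convex_convexHull ℝ V) hπV hcmem
        (by linarith [hη₀mem.2] : (0:ℝ) ≤ 1 - η₀) hη₀mem.1.le (by ring)
      convert hcomb using 1
      rfl
    have hptermfin : ∀ v ∈ VF, ∀ i, (if v i = 1 then s 1 (p i) else s 0 (p i)) ≠ ⊤ := by
      intro v hvVF i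
      by_cases hbi : (∃ w ∈ VF, w i = 1) ∧ (∃ w ∈ VF, w i = 0)
      · have hci := hcIoo i hbi.1 hbi.2
        have hπi := hπIcc i
        have hpIoo : p i ∈ Ioo (0:ℝ) 1 := by
          simp only [hpdef]
          constructor
          · nlinarith [hη₀mem.1, hη₀mem.2, hπi.1, hci.1]
          · nlinarith [hη₀mem.1, hη₀mem.2, hπi.2, hci.2]
        by_cases hvi : v i = 1
        · rw [if_pos hvi]; exact s1_ne_top hproper hpIoo.1 hpIoo.2.le
        · rw [if_neg hvi]; exact s0_ne_top hproper hpIoo.1.le hpIoo.2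
      · have hall : ∀ w ∈ VF, w i = v i := by
          intro w hw
          rcases hV01' w hw i with h | h <;> rcases hV01' v hvVF i with h2 | h2
          · rw [h, h2]
          · exact absurd ⟨⟨v, hvVF, h2⟩, ⟨w, hw, h⟩⟩ hbi
          · exact absurd ⟨⟨w, hw, h⟩, ⟨v, hvVF, h2⟩⟩ hbi
          · rw [h, h2]
        have hcv : c i = v i := hcconst i v hvVF hall
        have hπv : π i = v i := by
          by_cases hiN : i ∈ N
          · exfalso
            obtain ⟨⟨w1, hw1, hw1i⟩, ⟨w0, hw0, hw0i⟩⟩ := (Finset.mem_filter.1 hiN).2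
            have e1 := hall w1 (hVfinsub hw1)
            have e0 := hall w0 (hVfinsub hw0)
            rw [hw1i] at e1
            rw [hw0i] at e0
            exact one_ne_zero (e1.trans e0.symm)
          · rw [hKconst π hπK i hiN]
            exact hall v₀ (hVfinsub hv₀)
        have hpv : p i = v i := by
          simp only [hpdef]
          rw [hcv, hπv]
          ring
        rcases hV01' v hvVF i with h | h
        · rw [if_neg (by rw [h]; norm_num), hpv, h]
          exact s0_ne_top hproper le_rfl one_pos
        · rw [if_pos h, hpv, h]
          exact s1_ne_top hproper one_pos le_rfl
    refine ⟨p, hpmem, ?_⟩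
    intro v hvV
    have hvVF : v ∈ VF := (hVFmem v).2 hvV
    by_cases hvfin : v ∈ Vfin
    · have hps : (∑ i, if v i = 1 then s 1 (p i) else s 0 (p i)) =
          ENNReal.ofReal (∑ i, if v i = 1 then S s 1 (p i) else S s 0 (p i)) := by
        rw [ENNReal.ofReal_sum_of_nonneg
          (fun i _ => by split_ifs <;> exact ENNReal.toReal_nonneg)]
        refine Finset.sum_congr rfl fun i _ => ?_
        have hfin := hptermfin v hvVF i
        by_cases hvi : v i = 1
        · rw [if_pos hvi] at hfin ⊢
          rw [if_pos hvi, S, ENNReal.ofReal_toReal hfin]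
        · rw [if_neg hvi] at hfin ⊢
          rw [if_neg hvi, S, ENNReal.ofReal_toReal hfin]
      have hfs : (∑ i, if v i = 1 then s 1 (f i) else s 0 (f i)) =
          ENNReal.ofReal (∑ i, if v i = 1 then S s 1 (f i) else S s 0 (f i)) := by
        rw [ENNReal.ofReal_sum_of_nonneg
          (fun i _ => by split_ifs <;> exact ENNReal.toReal_nonneg)]
        refine Finset.sum_congr rfl fun i _ => ?_
        have hfin := hPfterm v hvfin i
        by_cases hvi : v i = 1
        · rw [if_pos hvi] at hfin ⊢
          rw [if_pos hvi, S, ENNReal.ofReal_toReal hfin]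
        · rw [if_neg hvi] at hfin ⊢
          rw [if_neg hvi, S, ENNReal.ofReal_toReal hfin]
      rw [hps, hfs]
      refine (ENNReal.ofReal_lt_ofReal_iff_of_nonneg
        (Finset.sum_nonneg fun i _ => by split_ifs <;> exact ENNReal.toReal_nonneg)).2 ?_
      exact hη₀lt v hvfin
    · have htop := hPftop v hvVF hvfin
      rw [htop, lt_top_iff_ne_top, ENNReal.sum_ne_top]
      exact fun i _ => hptermfin v hvVF i

end construction

end Stmt19

open Stmt19

/-- Corollary: for any proper scoring rule, a forecast `f` is weakly
dominated by some forecast `g ≠ f` iff it is strongly dominated by some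
coherent forecast. -/
theorem stmt_19 {Ω : Type*} [MeasurableSpace Ω] [Nonempty Ω] {n : ℕ}
    (E : Fin n → Set Ω) (hE : ∀ i, MeasurableSet (E i))
    (s : Fin 2 → ℝ → ENNReal)
    (hproper : ∀ p ∈ Icc (0:ℝ) 1, ∀ x ∈ Icc (0:ℝ) 1, x ≠ p →
      ENNReal.ofReal p * s 1 p + ENNReal.ofReal (1 - p) * s 0 p <
      ENNReal.ofReal p * s 1 x + ENNReal.ofReal (1 - p) * s 0 x)
    (hcont : ∀ i : Fin 2, ContinuousOn (s i) (Icc (0:ℝ) 1))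
    (f : Fin n → ℝ) (hf : ∀ i, f i ∈ Icc (0:ℝ) 1) :
    (∃ g : Fin n → ℝ, (∀ i, g i ∈ Icc (0:ℝ) 1) ∧ g ≠ f ∧
      ∀ ω : Ω,
        (∑ i, s ((E i).indicator (fun _ => (1 : Fin 2)) ω) (g i)) ≤
        (∑ i, s ((E i).indicator (fun _ => (1 : Fin 2)) ω) (f i))) ↔
    (∃ g : Fin n → ℝ,
      (∃ μ : Measure Ω, IsProbabilityMeasure μ ∧ ∀ i, g i = (μ (E i)).toReal) ∧
      ∀ ω : Ω,
        (∑ i, s ((E i).indicator (fun _ => (1 : Fin 2)) ω) (g i)) <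
        (∑ i, s ((E i).indicator (fun _ => (1 : Fin 2)) ω) (f i))) := by
  classical
  constructor
  · rintro ⟨g, hg01, hgf, hdom⟩
    set X : Ω → (Fin n → ℝ) := fun ω i => (E i).indicator (fun _ => (1:ℝ)) ω with hXdef
    have hPst : ∀ (h : Fin n → ℝ) (ω : Ω),
        (∑ i, s ((E i).indicator (fun _ => (1 : Fin 2)) ω) (h i)) =
        ∑ i, (if X ω i = 1 then s 1 (h i) else s 0 (h i)) := by
      intro h ω
      refine Finset.sum_congr rfl fun i _ => ?_
      by_cases hω : ω ∈ E i
      · have hx1 : X ω i = 1 := by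
          simp only [hXdef]
          exact Set.indicator_of_mem hω _
        rw [Set.indicator_of_mem hω, if_pos hx1]
      · have hx0 : X ω i = 0 := by
          simp only [hXdef]
          exact Set.indicator_of_notMem hω _
        rw [Set.indicator_of_notMem hω, if_neg (by rw [hx0]; norm_num)]
    have hV01 : ∀ v ∈ Set.range X, ∀ i, v i = 0 ∨ v i = 1 := by
      rintro v ⟨ω, rfl⟩ i
      by_cases hω : ω ∈ E i
      · right
        simp only [hXdef]
        exact Set.indicator_of_mem hω _
      · left
        simp only [hXdef]
        exact Set.indicator_of_notMem hω _
    have hVfin : (Set.range X).Finite := by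
      have hsub : Set.range X ⊆ Set.pi Set.univ (fun _ : Fin n => ({0,1} : Set ℝ)) := by
        intro v hv i _
        rcases hV01 v hv i with h | h
        · rw [h]; exact Set.mem_insert _ _
        · rw [h]; exact Set.mem_insert_of_mem _ rfl
      exact Set.Finite.subset (Set.Finite.pi fun _ => (Set.finite_singleton (1:ℝ)).insert 0) hsub
    have hVne : (Set.range X).Nonempty := Set.range_nonempty X
    have hfnC : f ∉ convexHull ℝ (Set.range X) := by
      intro hfC
      rw [hXdef] at hfC
      obtain ⟨μ, hμ, hμf⟩ := coherent_of_hull E hE hfC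
      exact coherent_not_dominated hproper E hE hf hg01 hgf hμ hμf hdom
    obtain ⟨p, hpmem, hpdom⟩ := construction hproper hcont hVfin hVne hV01 hf hfnC
    rw [hXdef] at hpmem
    obtain ⟨μ, hμ, hμp⟩ := coherent_of_hull E hE hpmem
    refine ⟨p, ⟨μ, hμ, hμp⟩, fun ω => ?_⟩
    rw [hPst p ω, hPst f ω]
    exact hpdom (X ω) (Set.mem_range_self ω)
  · rintro ⟨g, ⟨μ, hμ, hμg⟩, hdom⟩
    refine ⟨g, fun i => ?_, fun hgf => ?_, fun ω => (hdom ω).le⟩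
    · rw [hμg i]
      refine ⟨ENNReal.toReal_nonneg, ?_⟩
      have h1 : μ (E i) ≤ 1 := prob_le_one
      have := ENNReal.toReal_mono ENNReal.one_ne_top h1
      simpa using this
    · have := hdom (Classical.arbitrary Ω)
      rw [hgf] at this
      exact lt_irrefl _ this
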